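/- Suppose K_i is stabilizing (A − B K_i Hurwitz) and Θ_i has full column rank. Then the symmetric positive definite solution P_i of the Lyapunov equation (A − B K_i)^T P_i + P_i(A − B K_i) + K_i^T R K_i + Q = 0 is the unique symmetric matrix whose vectorization v(P_i) solves the least-squares regression Θ_i v(P) = Ξ_i exactly. -/

import Mathlib

open Matrix
open scoped Kronecker

abbrev SymIdx (n : ℕ) := {p : Fin n × Fin n // p.1 ≤ p.2}

noncomputable def vfun {n : ℕ} (P : Matrix (Fin n) (Fin n) ℝ) : SymIdx n → ℝ :=
  fun p => if p.1.1 = p.1.2 then P p.1.1 p.1.2 else 2 * P p.1.1 p.1.2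

noncomputable def Bfun {n : ℕ} (x y : Fin n → ℝ) : SymIdx n → ℝ :=
  fun p => if p.1.1 = p.1.2 then x p.1.1 * y p.1.1
           else (x p.1.1 * y p.1.2 + x p.1.2 * y p.1.1) / 2

noncomputable def kron {n : ℕ} (x y : Fin n → ℝ) : Fin n × Fin n → ℝ :=
  fun p => x p.1 * y p.2

def IsHurwitz {n : ℕ} (A : Matrix (Fin n) (Fin n) ℝ) : Prop :=
  ∀ μ ∈ spectrum ℂ (A.map (algebraMap ℝ ℂ)), μ.re < 0

section Helpers

open MeasureTheory intervalIntegral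

lemma vfun_sub {n : ℕ} (P P' : Matrix (Fin n) (Fin n) ℝ) :
    vfun (P - P') = vfun P - vfun P' := by
  funext p; simp only [vfun, Pi.sub_apply, Matrix.sub_apply]
  split <;> ring

lemma vfun_eq_zero {n : ℕ} {P : Matrix (Fin n) (Fin n) ℝ} (hP : P.IsSymm)
    (h : vfun P = 0) : P = 0 := by
  ext i j
  rcases le_total i j with hij | hij
  · have := congrFun h ⟨(i, j), hij⟩
    simp only [vfun, Pi.zero_apply] at this
    rcases eq_or_ne i j with rfl | hne
    · simpa using this
    · simp only [Fin.val_eq_val, hne, if_false] at this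
      have : P i j = 0 := by linarith
      simpa using this
  · have := congrFun h ⟨(j, i), hij⟩
    simp only [vfun, Pi.zero_apply] at this
    have hsymm : P i j = P j i := by
      have := hP.apply i j; simpa using this.symm
    rcases eq_or_ne j i with rfl | hne
    · simpa using this
    · simp only [Fin.val_eq_val, hne, if_false] at this
      have : P j i = 0 := by linarith
      simp [Matrix.zero_apply, hsymm, this]

lemma symdot {n : ℕ} (a b : Fin n → ℝ) {P : Matrix (Fin n) (Fin n) ℝ} (hP : P.IsSymm) :
    Bfun a b ⬝ᵥ vfun P = a ⬝ᵥ P.mulVec b := by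
  classical
  have hPs : ∀ i j : Fin n, P j i = P i j := fun i j => by
    conv_lhs => rw [← hP]
    rfl
  set G : Fin n × Fin n → ℝ := fun p => a p.1 * P p.1 p.2 * b p.2 with hG
  have hRHS : a ⬝ᵥ P.mulVec b = ∑ p : Fin n × Fin n, G p := by
    simp [hG, dotProduct, Matrix.mulVec, Fintype.sum_prod_type, Finset.mul_sum, mul_assoc]
  set s : Finset (Fin n × Fin n) := Finset.univ.filter (fun p => p.1 ≤ p.2) with hs
  have hLHS : Bfun a b ⬝ᵥ vfun P =
      ∑ p ∈ s, (if p.1 = p.2 then G p else G p + G p.swap) := by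
    rw [dotProduct]
    rw [Finset.sum_subtype (p := fun p : Fin n × Fin n => p.1 ≤ p.2) s (by simp [hs])
      (fun p : Fin n × Fin n => if p.1 = p.2 then G p else G p + G p.swap)]
    apply Finset.sum_congr rfl
    intro p _
    simp only [Bfun, vfun, hG, Prod.fst_swap, Prod.snd_swap]
    rcases eq_or_ne p.1.1 p.1.2 with h | h
    · simp [h]; ring
    · simp only [h, if_false]
      rw [hPs p.1.2 p.1.1]
      ring
  rw [hLHS, hRHS]
  have step1 : ∀ p ∈ s, (if p.1 = p.2 then G p else G p + G p.swap)
      = G p + (if ¬ p.1 = p.2 then G p.swap else 0) := by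
    intro p _; split <;> simp_all
  rw [Finset.sum_congr rfl step1, Finset.sum_add_distrib]
  rw [← Finset.sum_filter]
  have hff : s.filter (fun p => ¬ p.1 = p.2)
      = (Finset.univ.filter (fun p : Fin n × Fin n => ¬ p.1 ≤ p.2)).image Prod.swap := by
    ext p
    simp only [hs, Finset.mem_filter, Finset.mem_image, Finset.mem_univ, true_and]
    constructor
    · rintro ⟨h1, h2⟩
      exact ⟨p.swap, by simpa using not_le.mpr (lt_of_le_of_ne h1 h2), by simp⟩
    · rintro ⟨q, hq, rfl⟩
      have := not_le.mp hq
      exact ⟨le_of_lt (by simpa using this), by simp; exact ne_of_lt this⟩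
  rw [hff, Finset.sum_image (by intro q _ r _ h; simpa using congrArg Prod.swap h)]
  simp only [Prod.swap_swap]
  rw [← Finset.sum_filter_add_sum_filter_not Finset.univ (fun p : Fin n × Fin n => p.1 ≤ p.2) G]

lemma kron_mulVec {n : ℕ} (C : Matrix (Fin n) (Fin n) ℝ) (x y : Fin n → ℝ) :
    ((1 : Matrix (Fin n) (Fin n) ℝ) ⊗ₖ C).mulVec (kron x y) = kron x (C.mulVec y) := by
  funext p
  simp only [kron, Matrix.mulVec, dotProduct, kroneckerMap_apply, Fintype.sum_prod_type,
    Matrix.one_apply]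
  rw [Finset.sum_eq_single p.1]
  · simp [Finset.mul_sum]; ring_nf
    apply Finset.sum_congr rfl; intro j _; ring
  · intro i _ hi
    simp [Ne.symm hi]
  · simp

noncomputable def dotCLM {α : Type*} [Fintype α] (c : α → ℝ) : (α → ℝ) →L[ℝ] ℝ :=
  LinearMap.toContinuousLinearMap
    { toFun := fun v => v ⬝ᵥ c
      map_add' := fun v w => add_dotProduct v w c
      map_smul' := fun r v => smul_dotProduct r v c }

@[simp] lemma dotCLM_apply {α : Type*} [Fintype α] (c v : α → ℝ) :
    dotCLM c v = v ⬝ᵥ c := rfl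

lemma integral_dot {α : Type*} [Fintype α] (c : α → ℝ) {a b : ℝ} {F : ℝ → α → ℝ}
    (hF : IntervalIntegrable F volume a b) :
    (∫ τ in a..b, F τ) ⬝ᵥ c = ∫ τ in a..b, F τ ⬝ᵥ c := by
  rw [← dotCLM_apply c, ← ContinuousLinearMap.intervalIntegral_comp_comm (dotCLM c) hF]
  simp

lemma cont_dot {α : Type*} [Fintype α] {f g : ℝ → α → ℝ} (hf : Continuous f)
    (hg : Continuous g) : Continuous fun τ => f τ ⬝ᵥ g τ := by
  unfold dotProduct
  exact continuous_finset_sum _ fun i _ =>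
    ((continuous_apply i).comp hf).mul ((continuous_apply i).comp hg)

lemma cont_mulVec {α β : Type*} [Fintype β] {M : ℝ → Matrix α β ℝ} {v : ℝ → β → ℝ}
    (hM : Continuous M) (hv : Continuous v) : Continuous fun τ => (M τ).mulVec (v τ) :=
  continuous_pi fun i => cont_dot ((continuous_apply i).comp hM) hv

lemma continuous_Bfun {n : ℕ} {x y : ℝ → Fin n → ℝ} (hx : Continuous x)
    (hy : Continuous y) : Continuous fun τ => Bfun (x τ) (y τ) := by
  apply continuous_pi
  intro p
  simp only [Bfun]
  split
  · exact ((continuous_apply _).comp hx).mul ((continuous_apply _).comp hy)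
  · exact ((((continuous_apply _).comp hx).mul ((continuous_apply _).comp hy)).add
      (((continuous_apply _).comp hx).mul ((continuous_apply _).comp hy))).div_const 2

lemma dot_sum_pairs {n : ℕ} (P : Matrix (Fin n) (Fin n) ℝ) (v w : Fin n → ℝ) :
    v ⬝ᵥ P.mulVec w = ∑ p : Fin n × Fin n, v p.1 * P p.1 p.2 * w p.2 := by
  simp [dotProduct, Matrix.mulVec, Fintype.sum_prod_type, Finset.mul_sum, mul_assoc]

lemma hasDerivAt_quad {n : ℕ} (P : Matrix (Fin n) (Fin n) ℝ) {x : ℝ → Fin n → ℝ}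
    {x' : Fin n → ℝ} {τ : ℝ} (hx : HasDerivAt x x' τ) :
    HasDerivAt (fun s => x s ⬝ᵥ P.mulVec (x s))
      (x' ⬝ᵥ P.mulVec (x τ) + x τ ⬝ᵥ P.mulVec x') τ := by
  have hxi : ∀ i, HasDerivAt (fun s => x s i) (x' i) τ := fun i => hasDerivAt_pi.mp hx i
  have key : HasDerivAt (fun s => ∑ p : Fin n × Fin n, x s p.1 * P p.1 p.2 * x s p.2)
      (∑ p : Fin n × Fin n,
        (x' p.1 * P p.1 p.2 * x τ p.2 + x τ p.1 * P p.1 p.2 * x' p.2)) τ := by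
    apply HasDerivAt.fun_sum
    intro p _
    exact ((hxi p.1).mul_const (P p.1 p.2)).mul (hxi p.2)
  convert key using 2 with s
  · exact dot_sum_pairs P (x s) (x s)
  · rw [dot_sum_pairs, dot_sum_pairs, ← Finset.sum_add_distrib]

lemma symm_dot_mulVec {n : ℕ} {P : Matrix (Fin n) (Fin n) ℝ} (hP : P.IsSymm)
    (v w : Fin n → ℝ) : v ⬝ᵥ P.mulVec w = w ⬝ᵥ P.mulVec v := by
  rw [Matrix.dotProduct_mulVec, dotProduct_comm, ← Matrix.mulVec_transpose, hP.eq]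

lemma mulVec_dot {α β : Type*} [Fintype α] [Fintype β] (M : Matrix α β ℝ)
    (w : β → ℝ) (v : α → ℝ) : (M.mulVec w) ⬝ᵥ v = w ⬝ᵥ Mᵀ.mulVec v := by
  rw [dotProduct_comm, Matrix.dotProduct_mulVec, ← Matrix.mulVec_transpose, dotProduct_comm]

lemma dot_transpose_mulVec {n : ℕ} (C : Matrix (Fin n) (Fin n) ℝ) (v w : Fin n → ℝ) :
    v ⬝ᵥ Cᵀ.mulVec w = (C.mulVec v) ⬝ᵥ w := by
  rw [Matrix.dotProduct_mulVec, Matrix.vecMul_transpose]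

end Helpers

open MeasureTheory intervalIntegral in
set_option maxHeartbeats 1000000 in
/-- If `Kᵢ` is stabilizing and `Θᵢ` has full column rank, then the symmetric positive
definite Lyapunov solution `Pᵢ` is the unique symmetric matrix whose vectorization
solves the regression `Θᵢ v(P) = Ξᵢ` exactly. -/
theorem eirl_regression_unique {n m l : ℕ}
    (A : Matrix (Fin n) (Fin n) ℝ) (B : Matrix (Fin n) (Fin m) ℝ)
    (Q : Matrix (Fin n) (Fin n) ℝ) (R : Matrix (Fin m) (Fin m) ℝ)
    (Ki : Matrix (Fin m) (Fin n) ℝ)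
    (hKi : IsHurwitz (A - B * Ki))
    (W : Matrix (SymIdx n) (Fin n × Fin n) ℝ)
    (hW : ∀ x y : Fin n → ℝ, Bfun x y = W.mulVec (kron x y))
    (Wr : Matrix (Fin n × Fin n) (SymIdx n) ℝ)
    (hWr : ∀ x : Fin n → ℝ, kron x x = Wr.mulVec (Bfun x x))
    (f : (Fin n → ℝ) → (Fin n → ℝ)) (g : (Fin n → ℝ) → Matrix (Fin n) (Fin m) ℝ)
    (u : ℝ → (Fin m → ℝ)) (x : ℝ → (Fin n → ℝ))
    (hf : Continuous f) (hg : Continuous g) (hu : Continuous u)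
    (hx : ∀ τ : ℝ, HasDerivAt x (f (x τ) + (g (x τ)).mulVec (u τ)) τ)
    (t : Fin (l + 1) → ℝ) (ht : StrictMono t)
    (IB Θ : Matrix (Fin l) (SymIdx n) ℝ) (Ξ : Fin l → ℝ)
    (hIB : ∀ k : Fin l,
      IB k = ∫ τ in t k.castSucc..t k.succ, Bfun (x τ) (x τ))
    (hΘ : ∀ k : Fin l,
      Θ k = Bfun (x (t k.succ) + x (t k.castSucc)) (x (t k.succ) - x (t k.castSucc)) -
        (2 : ℝ) • ((W * ((1 : Matrix (Fin n) (Fin n) ℝ) ⊗ₖ (B * Ki)) * Wr).mulVec (IB k) +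
          (∫ τ in t k.castSucc..t k.succ, Bfun (x τ) ((g (x τ)).mulVec (u τ))) +
          (∫ τ in t k.castSucc..t k.succ, Bfun (x τ) (f (x τ) - A.mulVec (x τ)))))
    (hΞ : ∀ k : Fin l, Ξ k = -(IB k ⬝ᵥ vfun (Q + Kiᵀ * R * Ki)))
    (hΘrank : ∀ c : SymIdx n → ℝ, Θ.mulVec c = 0 → c = 0)
    (Pi : Matrix (Fin n) (Fin n) ℝ)
    (hPisymm : Pi.IsSymm) (hPipd : Pi.PosDef)
    (hALE : (A - B * Ki)ᵀ * Pi + Pi * (A - B * Ki) + Kiᵀ * R * Ki + Q = 0) :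
    Θ.mulVec (vfun Pi) = Ξ ∧
    ∀ P : Matrix (Fin n) (Fin n) ℝ, P.IsSymm → Θ.mulVec (vfun P) = Ξ → P = Pi := by
  classical
  have hxc : Continuous x := by
    rw [continuous_iff_continuousAt]; exact fun τ => (hx τ).continuousAt
  set S : Matrix (Fin n) (Fin n) ℝ := A - B * Ki with hSdef
  -- symmetry of Q + KᵀRK
  have hM : Q + Kiᵀ * R * Ki = -(Sᵀ * Pi + Pi * S) := by
    have h2 : (Sᵀ * Pi + Pi * S) + (Q + Kiᵀ * R * Ki) = 0 := by
      rw [← hALE]; abel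
    exact eq_neg_of_add_eq_zero_right h2
  have hQsym : (Q + Kiᵀ * R * Ki).IsSymm := by
    rw [Matrix.IsSymm, hM, transpose_neg, transpose_add, transpose_mul, transpose_mul,
      transpose_transpose, hPisymm.eq, add_comm]
  -- continuity of integrands
  have hx'c : Continuous fun τ => f (x τ) + (g (x τ)).mulVec (u τ) :=
    (hf.comp hxc).add (cont_mulVec (hg.comp hxc) hu)
  have hq0c : Continuous fun τ => x τ ⬝ᵥ Pi.mulVec (f (x τ) + (g (x τ)).mulVec (u τ)) :=
    cont_dot hxc (cont_mulVec continuous_const hx'c)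
  have hq1c : Continuous fun τ => x τ ⬝ᵥ Pi.mulVec ((B * Ki).mulVec (x τ)) :=
    cont_dot hxc (cont_mulVec continuous_const (cont_mulVec continuous_const hxc))
  have hq2c : Continuous fun τ => x τ ⬝ᵥ Pi.mulVec ((g (x τ)).mulVec (u τ)) :=
    cont_dot hxc (cont_mulVec continuous_const (cont_mulVec (hg.comp hxc) hu))
  have hq3c : Continuous fun τ => x τ ⬝ᵥ Pi.mulVec (f (x τ) - A.mulVec (x τ)) :=
    cont_dot hxc (cont_mulVec continuous_const
      ((hf.comp hxc).sub (cont_mulVec continuous_const hxc)))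
  have hqQc : Continuous fun τ => x τ ⬝ᵥ (Q + Kiᵀ * R * Ki).mulVec (x τ) :=
    cont_dot hxc (cont_mulVec continuous_const hxc)
  -- pointwise identity
  have hpt : ∀ τ : ℝ,
      2 * (x τ ⬝ᵥ Pi.mulVec (f (x τ) + (g (x τ)).mulVec (u τ))) -
        2 * ((x τ ⬝ᵥ Pi.mulVec ((B * Ki).mulVec (x τ))) +
          (x τ ⬝ᵥ Pi.mulVec ((g (x τ)).mulVec (u τ))) +
          (x τ ⬝ᵥ Pi.mulVec (f (x τ) - A.mulVec (x τ)))) =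
      -(x τ ⬝ᵥ (Q + Kiᵀ * R * Ki).mulVec (x τ)) := by
    intro τ
    have L : ∀ w1 w2 : Fin n → ℝ,
        x τ ⬝ᵥ Pi.mulVec w1 - x τ ⬝ᵥ Pi.mulVec w2 = x τ ⬝ᵥ Pi.mulVec (w1 - w2) := by
      intro w1 w2; rw [Matrix.mulVec_sub, dotProduct_sub]
    have Ladd : ∀ w1 w2 : Fin n → ℝ,
        x τ ⬝ᵥ Pi.mulVec w1 + x τ ⬝ᵥ Pi.mulVec w2 = x τ ⬝ᵥ Pi.mulVec (w1 + w2) := by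
      intro w1 w2; rw [Matrix.mulVec_add, dotProduct_add]
    have e1 : x τ ⬝ᵥ Pi.mulVec (f (x τ) + (g (x τ)).mulVec (u τ)) -
        ((x τ ⬝ᵥ Pi.mulVec ((B * Ki).mulVec (x τ))) +
          (x τ ⬝ᵥ Pi.mulVec ((g (x τ)).mulVec (u τ))) +
          (x τ ⬝ᵥ Pi.mulVec (f (x τ) - A.mulVec (x τ)))) =
        x τ ⬝ᵥ Pi.mulVec (S.mulVec (x τ)) := by
      rw [Ladd, Ladd, L]
      have hv : f (x τ) + (g (x τ)).mulVec (u τ) -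
          ((B * Ki).mulVec (x τ) + (g (x τ)).mulVec (u τ) + (f (x τ) - A.mulVec (x τ))) =
          S.mulVec (x τ) := by
        rw [hSdef, Matrix.sub_mulVec]
        abel
      rw [hv]
    have e2 : x τ ⬝ᵥ (Sᵀ * Pi + Pi * S + Kiᵀ * R * Ki + Q).mulVec (x τ) = 0 := by
      rw [hALE]
      simp
    have e3 : x τ ⬝ᵥ (Sᵀ * Pi).mulVec (x τ) = x τ ⬝ᵥ Pi.mulVec (S.mulVec (x τ)) := by
      rw [← Matrix.mulVec_mulVec, dot_transpose_mulVec]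
      exact symm_dot_mulVec hPisymm _ _
    have e4 : x τ ⬝ᵥ (Pi * S).mulVec (x τ) = x τ ⬝ᵥ Pi.mulVec (S.mulVec (x τ)) := by
      rw [← Matrix.mulVec_mulVec]
    rw [Matrix.add_mulVec, Matrix.add_mulVec, Matrix.add_mulVec, dotProduct_add,
      dotProduct_add, dotProduct_add, e3, e4] at e2
    have e5 : x τ ⬝ᵥ (Q + Kiᵀ * R * Ki).mulVec (x τ) =
        x τ ⬝ᵥ Q.mulVec (x τ) + x τ ⬝ᵥ (Kiᵀ * R * Ki).mulVec (x τ) := by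
      rw [Matrix.add_mulVec, dotProduct_add]
    rw [e5]
    have := e1
    linarith [e1, e2]
  -- the forward identity
  have hforward : Θ.mulVec (vfun Pi) = Ξ := by
    funext k
    show Θ k ⬝ᵥ vfun Pi = Ξ k
    set a : ℝ := t k.castSucc with hadef
    set b : ℝ := t k.succ with hbdef
    have hab : a ≤ b := (ht (Fin.castSucc_lt_succ : k.castSucc < k.succ)).le
    -- interval integrability
    have hIBint : IntervalIntegrable (fun τ => Bfun (x τ) (x τ)) volume a b :=
      (continuous_Bfun hxc hxc).intervalIntegrable a b
    have hI2int : IntervalIntegrable (fun τ => Bfun (x τ) ((g (x τ)).mulVec (u τ)))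
        volume a b :=
      (continuous_Bfun hxc (cont_mulVec (hg.comp hxc) hu)).intervalIntegrable a b
    have hI3int : IntervalIntegrable (fun τ => Bfun (x τ) (f (x τ) - A.mulVec (x τ)))
        volume a b :=
      (continuous_Bfun hxc ((hf.comp hxc).sub (cont_mulVec continuous_const hxc))).intervalIntegrable a b
    -- term 1
    set M : Matrix (SymIdx n) (SymIdx n) ℝ :=
      W * ((1 : Matrix (Fin n) (Fin n) ℝ) ⊗ₖ (B * Ki)) * Wr with hMdef
    have hT1 : (M.mulVec (∫ τ in a..b, Bfun (x τ) (x τ))) ⬝ᵥ vfun Pi =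
        ∫ τ in a..b, x τ ⬝ᵥ Pi.mulVec ((B * Ki).mulVec (x τ)) := by
      rw [mulVec_dot, integral_dot _ hIBint]
      apply intervalIntegral.integral_congr
      intro τ _
      show Bfun (x τ) (x τ) ⬝ᵥ Mᵀ.mulVec (vfun Pi) = x τ ⬝ᵥ Pi.mulVec ((B * Ki).mulVec (x τ))
      rw [← mulVec_dot]
      have hMv : M.mulVec (Bfun (x τ) (x τ)) = Bfun (x τ) ((B * Ki).mulVec (x τ)) := by
        rw [hMdef, ← Matrix.mulVec_mulVec, ← Matrix.mulVec_mulVec, ← hWr, kron_mulVec, ← hW]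
      rw [hMv, symdot _ _ hPisymm]
    -- term 2
    have hT2 : (∫ τ in a..b, Bfun (x τ) ((g (x τ)).mulVec (u τ))) ⬝ᵥ vfun Pi =
        ∫ τ in a..b, x τ ⬝ᵥ Pi.mulVec ((g (x τ)).mulVec (u τ)) := by
      rw [integral_dot _ hI2int]
      exact intervalIntegral.integral_congr fun τ _ => symdot _ _ hPisymm
    -- term 3
    have hT3 : (∫ τ in a..b, Bfun (x τ) (f (x τ) - A.mulVec (x τ))) ⬝ᵥ vfun Pi =
        ∫ τ in a..b, x τ ⬝ᵥ Pi.mulVec (f (x τ) - A.mulVec (x τ)) := by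
      rw [integral_dot _ hI3int]
      exact intervalIntegral.integral_congr fun τ _ => symdot _ _ hPisymm
    -- head term via FTC
    have hhead : Bfun (x b + x a) (x b - x a) ⬝ᵥ vfun Pi =
        ∫ τ in a..b, 2 * (x τ ⬝ᵥ Pi.mulVec (f (x τ) + (g (x τ)).mulVec (u τ))) := by
      have hderiv : ∀ τ ∈ Set.uIcc a b,
          HasDerivAt (fun s => x s ⬝ᵥ Pi.mulVec (x s))
            (2 * (x τ ⬝ᵥ Pi.mulVec (f (x τ) + (g (x τ)).mulVec (u τ)))) τ := by
        intro τ _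
        have h := hasDerivAt_quad Pi (hx τ)
        have hs := symm_dot_mulVec hPisymm (f (x τ) + (g (x τ)).mulVec (u τ)) (x τ)
        convert h using 1
        rw [hs]; ring
      have hFTC := intervalIntegral.integral_eq_sub_of_hasDerivAt hderiv
        ((continuous_const.mul hq0c).intervalIntegrable a b)
      rw [hFTC, symdot _ _ hPisymm]
      have hswap := symm_dot_mulVec hPisymm (x a) (x b)
      rw [Matrix.mulVec_sub, dotProduct_sub, add_dotProduct, add_dotProduct]
      linarith
    -- assemble
    rw [hΘ k, hΞ k, hIB k, ← hadef, ← hbdef]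
    simp only [sub_dotProduct, smul_dotProduct, add_dotProduct,
      smul_eq_mul]
    rw [hT1, hT2, hT3, hhead, integral_dot _ hIBint,
      intervalIntegral.integral_congr (g := fun τ => x τ ⬝ᵥ (Q + Kiᵀ * R * Ki).mulVec (x τ))
        (fun τ _ => symdot (x τ) (x τ) hQsym)]
    have hzero : (∫ τ in a..b,
        (2 * (x τ ⬝ᵥ Pi.mulVec (f (x τ) + (g (x τ)).mulVec (u τ))) -
          2 * ((x τ ⬝ᵥ Pi.mulVec ((B * Ki).mulVec (x τ))) +
            (x τ ⬝ᵥ Pi.mulVec ((g (x τ)).mulVec (u τ))) +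
            (x τ ⬝ᵥ Pi.mulVec (f (x τ) - A.mulVec (x τ)))) +
          x τ ⬝ᵥ (Q + Kiᵀ * R * Ki).mulVec (x τ))) = 0 := by
      have heq : (fun τ =>
          (2 * (x τ ⬝ᵥ Pi.mulVec (f (x τ) + (g (x τ)).mulVec (u τ))) -
            2 * ((x τ ⬝ᵥ Pi.mulVec ((B * Ki).mulVec (x τ))) +
              (x τ ⬝ᵥ Pi.mulVec ((g (x τ)).mulVec (u τ))) +
              (x τ ⬝ᵥ Pi.mulVec (f (x τ) - A.mulVec (x τ)))) +
            x τ ⬝ᵥ (Q + Kiᵀ * R * Ki).mulVec (x τ))) = (fun _ => (0 : ℝ)) := by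
        funext τ
        have := hpt τ
        linarith
      rw [heq]
      simp
    have hsplit : (∫ τ in a..b,
        (2 * (x τ ⬝ᵥ Pi.mulVec (f (x τ) + (g (x τ)).mulVec (u τ))) -
          2 * ((x τ ⬝ᵥ Pi.mulVec ((B * Ki).mulVec (x τ))) +
            (x τ ⬝ᵥ Pi.mulVec ((g (x τ)).mulVec (u τ))) +
            (x τ ⬝ᵥ Pi.mulVec (f (x τ) - A.mulVec (x τ)))) +
          x τ ⬝ᵥ (Q + Kiᵀ * R * Ki).mulVec (x τ))) =
        (∫ τ in a..b, 2 * (x τ ⬝ᵥ Pi.mulVec (f (x τ) + (g (x τ)).mulVec (u τ)))) -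
        2 * ((∫ τ in a..b, x τ ⬝ᵥ Pi.mulVec ((B * Ki).mulVec (x τ))) +
          (∫ τ in a..b, x τ ⬝ᵥ Pi.mulVec ((g (x τ)).mulVec (u τ))) +
          (∫ τ in a..b, x τ ⬝ᵥ Pi.mulVec (f (x τ) - A.mulVec (x τ)))) +
        (∫ τ in a..b, x τ ⬝ᵥ (Q + Kiᵀ * R * Ki).mulVec (x τ)) := by
      rw [intervalIntegral.integral_add
          (((continuous_const.fun_mul hq0c).fun_sub (continuous_const.fun_mul ((hq1c.fun_add hq2c).fun_add hq3c))).intervalIntegrable a b)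
          (hqQc.intervalIntegrable a b)]
      rw [intervalIntegral.integral_sub ((continuous_const.fun_mul hq0c).intervalIntegrable a b)
          ((continuous_const.fun_mul ((hq1c.fun_add hq2c).fun_add hq3c)).intervalIntegrable a b)]
      rw [intervalIntegral.integral_const_mul, intervalIntegral.integral_const_mul]
      rw [intervalIntegral.integral_add ((hq1c.fun_add hq2c).intervalIntegrable a b)
          (hq3c.intervalIntegrable a b)]
      rw [intervalIntegral.integral_add (hq1c.intervalIntegrable a b)
          (hq2c.intervalIntegrable a b)]
    rw [hsplit] at hzero
    linarith
  refine ⟨hforward, ?_⟩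
  intro P hPsym hPeq
  have h1 : Θ.mulVec (vfun (P - Pi)) = 0 := by
    rw [vfun_sub, Matrix.mulVec_sub, hPeq, hforward, sub_self]
  have h3 := vfun_eq_zero (hPsym.sub hPisymm) (hΘrank _ h1)
  exact sub_eq_zero.mp h3
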